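/- arXiv:1612.01767 — 2 statements merged into one kernel-verified Lean document; each statement's English description precedes it below -/
import Mathlib

section
/- Let A and B be nonnegative n×n real matrices. Then ‖A^{(1/2)} ∘ B^{(1/2)}‖ ≤ ρ((AᵀB)^{(1/2)} ∘ (BᵀA)^{(1/2)})^{1/2} ≤ ρ(AᵀB)^{1/2}, where ‖·‖ is the Euclidean operator norm. -/
open Matrix

/-- Spectral radius of a real matrix: max modulus of its (complex) eigenvalues. -/
noncomputable def specRad {N : Type*} [Fintype N] [DecidableEq N] (A : Matrix N N ℝ) : ℝ :=
  (spectralRadius ℂ (A.map Complex.ofReal)).toReal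

/-- Operator norm induced by the Euclidean (ℓ²) norm. -/
noncomputable def l2OpNorm {N : Type*} [Fintype N] [DecidableEq N] (A : Matrix N N ℝ) : ℝ :=
  ‖Matrix.toEuclideanCLM (𝕜 := ℝ) A‖

/-- Entrywise α-th power (with the convention 0^0 = 1, as for `Real.rpow`). -/
noncomputable def hadPow {N : Type*} (A : Matrix N N ℝ) (α : ℝ) : Matrix N N ℝ :=
  fun i j => A i j ^ α

section Helpers

set_option linter.unusedSectionVars false
set_option linter.unusedVariables false

-- Cauchy-Schwarz with square roots
lemma cs_sqrt {ι : Type*} (s : Finset ι) (f g : ι → ℝ) (hf : ∀ i, 0 ≤ f i) (hg : ∀ i, 0 ≤ g i) :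
    ∑ i ∈ s, Real.sqrt (f i) * Real.sqrt (g i) ≤
      Real.sqrt (∑ i ∈ s, f i) * Real.sqrt (∑ i ∈ s, g i) := by
  have h := Finset.sum_sq_le_sum_mul_sum_of_sq_eq_mul s
    (r := fun i => Real.sqrt (f i) * Real.sqrt (g i)) (f := f) (g := g)
    (fun i _ => hf i) (fun i _ => hg i)
    (fun i _ => by rw [mul_pow, Real.sq_sqrt (hf i), Real.sq_sqrt (hg i)])
  calc ∑ i ∈ s, Real.sqrt (f i) * Real.sqrt (g i)
      = Real.sqrt ((∑ i ∈ s, Real.sqrt (f i) * Real.sqrt (g i)) ^ 2) := by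
        rw [Real.sqrt_sq (Finset.sum_nonneg fun i _ => mul_nonneg (Real.sqrt_nonneg _) (Real.sqrt_nonneg _))]
    _ ≤ Real.sqrt ((∑ i ∈ s, f i) * ∑ i ∈ s, g i) := Real.sqrt_le_sqrt h
    _ = _ := Real.sqrt_mul (Finset.sum_nonneg fun i _ => hf i) _

variable {N : Type*} [Fintype N] [DecidableEq N]

lemma mul_entry_nonneg {X Y : Matrix N N ℝ} (hX : ∀ i j, 0 ≤ X i j) (hY : ∀ i j, 0 ≤ Y i j) :
    ∀ i j, 0 ≤ (X * Y) i j := fun i j =>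
  Finset.sum_nonneg fun k _ => mul_nonneg (hX i k) (hY k j)

lemma pow_entry_nonneg {X : Matrix N N ℝ} (hX : ∀ i j, 0 ≤ X i j) (k : ℕ) :
    ∀ i j, 0 ≤ (X ^ (k+1)) i j := by
  induction k with
  | zero => simpa using hX
  | succ k ih => rw [pow_succ]; exact mul_entry_nonneg ih hX

lemma mul_le_sqrt_step {X Y Z W U V : Matrix N N ℝ}
    (hX : ∀ i j, 0 ≤ X i j) (hY : ∀ i j, 0 ≤ Y i j)
    (hZ : ∀ i j, 0 ≤ Z i j) (hW : ∀ i j, 0 ≤ W i j)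
    (hU0 : ∀ i j, 0 ≤ U i j) (hV0 : ∀ i j, 0 ≤ V i j)
    (hU : ∀ i j, U i j ≤ Real.sqrt (X i j) * Real.sqrt (Y i j))
    (hV : ∀ i j, V i j ≤ Real.sqrt (Z i j) * Real.sqrt (W i j)) :
    ∀ i j, (U * V) i j ≤ Real.sqrt ((X * Z) i j) * Real.sqrt ((Y * W) i j) := by
  intro i j
  have h1 : (U * V) i j ≤ ∑ l, Real.sqrt (X i l * Z l j) * Real.sqrt (Y i l * W l j) := by
    rw [Matrix.mul_apply]
    refine Finset.sum_le_sum fun l _ => ?_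
    calc U i l * V l j ≤ (Real.sqrt (X i l) * Real.sqrt (Y i l)) *
          (Real.sqrt (Z l j) * Real.sqrt (W l j)) :=
        mul_le_mul (hU i l) (hV l j) (hV0 l j)
          (mul_nonneg (Real.sqrt_nonneg _) (Real.sqrt_nonneg _))
      _ = Real.sqrt (X i l * Z l j) * Real.sqrt (Y i l * W l j) := by
        rw [Real.sqrt_mul (hX i l), Real.sqrt_mul (hY i l)]; ring
  refine h1.trans ?_
  have := cs_sqrt Finset.univ (fun l => X i l * Z l j) (fun l => Y i l * W l j)
    (fun l => mul_nonneg (hX i l) (hZ l j)) (fun l => mul_nonneg (hY i l) (hW l j))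
  simpa [Matrix.mul_apply] using this

lemma had_pow_le {M : Matrix N N ℝ} (hM : ∀ i j, 0 ≤ M i j)
    {S : Matrix N N ℝ} (hS0 : ∀ i j, 0 ≤ S i j)
    (hS : ∀ i j, S i j ≤ Real.sqrt (M i j) * Real.sqrt (Mᵀ i j)) (k : ℕ) :
    ∀ i j, (S ^ (k+1)) i j ≤ Real.sqrt ((M ^ (k+1)) i j) * Real.sqrt (((Mᵀ) ^ (k+1)) i j) := by
  have hMt : ∀ i j, 0 ≤ Mᵀ i j := fun i j => hM j i
  induction k with
  | zero => simpa using hS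
  | succ k ih =>
    have := mul_le_sqrt_step (pow_entry_nonneg hM k) (pow_entry_nonneg hMt k) hM hMt
      (pow_entry_nonneg hS0 k) hS0 ih hS
    intro i j
    simpa [pow_succ] using this i j

section Linfty
open scoped ENNReal NNReal
attribute [local instance] Matrix.linftyOpNormedRing Matrix.linftyOpNormedAlgebra

noncomputable def cmap (X : Matrix N N ℝ) : Matrix N N ℂ := X.map Complex.ofReal

lemma cmap_mul (X Y : Matrix N N ℝ) : cmap (X * Y) = cmap X * cmap Y :=
  Matrix.map_mul (f := Complex.ofRealHom)

lemma cmap_pow (X : Matrix N N ℝ) (k : ℕ) : cmap (X ^ k) = (cmap X) ^ k := by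
  induction k with
  | zero => simp [cmap]
  | succ k ih => rw [pow_succ, pow_succ, cmap_mul, ih]

lemma cmap_nnnorm (X : Matrix N N ℝ) :
    ‖cmap X‖₊ = Finset.univ.sup fun i => ∑ j, ‖X i j‖₊ := by
  rw [Matrix.linfty_opNNNorm_def]
  simp [cmap]

lemma rowsum_le_nnnorm {X : Matrix N N ℝ} (hX : ∀ i j, 0 ≤ X i j) (i : N) :
    ∑ j, X i j ≤ (‖cmap X‖₊ : ℝ) := by
  rw [cmap_nnnorm]
  calc ∑ j, X i j = ((∑ j, ‖X i j‖₊ : ℝ≥0) : ℝ) := by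
        push_cast
        exact (Finset.sum_congr rfl fun j _ => (Real.norm_of_nonneg (hX i j)).symm)
    _ ≤ _ := NNReal.coe_le_coe.mpr (Finset.le_sup (f := fun i => ∑ j, ‖X i j‖₊) (Finset.mem_univ i))

lemma nnnorm_le_of_rowsum_le {X : Matrix N N ℝ} (hX : ∀ i j, 0 ≤ X i j) {c : ℝ≥0}
    (h : ∀ i, ∑ j, X i j ≤ (c : ℝ)) : ‖cmap X‖₊ ≤ c := by
  rw [cmap_nnnorm]
  refine Finset.sup_le fun i _ => ?_
  have : ((∑ j, ‖X i j‖₊ : ℝ≥0) : ℝ) ≤ (c : ℝ) := by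
    push_cast
    calc ∑ j, ‖X i j‖ = ∑ j, X i j :=
          Finset.sum_congr rfl fun j _ => Real.norm_of_nonneg (hX i j)
      _ ≤ (c : ℝ) := h i
  exact_mod_cast this

end Linfty

section Spec
open scoped ENNReal NNReal Topology
open Filter
attribute [local instance] Matrix.linftyOpNormedRing Matrix.linftyOpNormedAlgebra
  Matrix.linfty_opNormOneClass

lemma gelfand (X : Matrix N N ℝ) :
    Tendsto (fun n : ℕ => (‖(cmap X) ^ n‖₊ : ℝ≥0∞) ^ (1 / n : ℝ)) atTop
      (𝓝 (spectralRadius ℂ (cmap X))) :=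
  spectrum.pow_nnnorm_pow_one_div_tendsto_nhds_spectralRadius (cmap X)

lemma specRadius_ne_top [Nonempty N] (X : Matrix N N ℝ) :
    spectralRadius ℂ (cmap X) ≠ ∞ :=
  ((spectrum.spectralRadius_le_nnnorm (cmap X)).trans_lt ENNReal.coe_lt_top).ne

lemma specRad_eq (X : Matrix N N ℝ) : specRad X = (spectralRadius ℂ (cmap X)).toReal := rfl

lemma spectrum_transpose (X : Matrix N N ℂ) : spectrum ℂ Xᵀ = spectrum ℂ X := by
  ext z
  simp only [spectrum.mem_iff, Matrix.isUnit_iff_isUnit_det]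
  have : algebraMap ℂ (Matrix N N ℂ) z - Xᵀ = (algebraMap ℂ (Matrix N N ℂ) z - X)ᵀ := by
    rw [Matrix.transpose_sub]
    congr 1
    rw [Matrix.algebraMap_eq_diagonal]
    exact (Matrix.diagonal_transpose _).symm
  rw [this, Matrix.det_transpose]

lemma specRadius_transpose (X : Matrix N N ℝ) :
    spectralRadius ℂ (cmap Xᵀ) = spectralRadius ℂ (cmap X) := by
  have : cmap Xᵀ = (cmap X)ᵀ := Matrix.transpose_map
  rw [spectralRadius, spectralRadius, this, spectrum_transpose]

lemma entry_mul_le {X Y U V : Matrix N N ℝ}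
    (hX : ∀ i j, 0 ≤ X i j) (hU : ∀ i j, 0 ≤ U i j)
    (hXY : ∀ i j, X i j ≤ Y i j) (hUV : ∀ i j, U i j ≤ V i j) :
    ∀ i j, (X * U) i j ≤ (Y * V) i j := by
  intro i j
  rw [Matrix.mul_apply, Matrix.mul_apply]
  refine Finset.sum_le_sum fun k _ => mul_le_mul (hXY i k) (hUV k j) (hU k j)
    ((hX i k).trans (hXY i k))

lemma entry_pow_le {X Y : Matrix N N ℝ} (hX : ∀ i j, 0 ≤ X i j)
    (hXY : ∀ i j, X i j ≤ Y i j) (k : ℕ) :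
    ∀ i j, (X ^ (k+1)) i j ≤ (Y ^ (k+1)) i j := by
  induction k with
  | zero => simpa using hXY
  | succ k ih =>
    have := entry_mul_le (pow_entry_nonneg hX k) hX ih hXY
    intro i j
    simpa [pow_succ] using this i j

lemma mat_nnnorm_pow_mono {X Y : Matrix N N ℝ} (hX : ∀ i j, 0 ≤ X i j)
    (hXY : ∀ i j, X i j ≤ Y i j) (n : ℕ) :
    ‖(cmap X) ^ n‖₊ ≤ ‖(cmap Y) ^ n‖₊ := by
  cases n with
  | zero => simp
  | succ k =>
    have hY : ∀ i j, 0 ≤ Y i j := fun i j => (hX i j).trans (hXY i j)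
    rw [← cmap_pow, ← cmap_pow]
    refine nnnorm_le_of_rowsum_le (pow_entry_nonneg hX k) fun i => ?_
    calc ∑ j, (X ^ (k+1)) i j ≤ ∑ j, (Y ^ (k+1)) i j :=
          Finset.sum_le_sum fun j _ => entry_pow_le hX hXY k i j
      _ ≤ _ := rowsum_le_nnnorm (pow_entry_nonneg hY k) i

lemma specRad_mono [Nonempty N] {X Y : Matrix N N ℝ} (hX : ∀ i j, 0 ≤ X i j)
    (hXY : ∀ i j, X i j ≤ Y i j) : specRad X ≤ specRad Y := by
  have h : spectralRadius ℂ (cmap X) ≤ spectralRadius ℂ (cmap Y) := by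
    refine le_of_tendsto_of_tendsto' (gelfand X) (gelfand Y) fun n => ?_
    exact ENNReal.rpow_le_rpow (by exact_mod_cast mat_nnnorm_pow_mono hX hXY n)
      (by positivity)
  exact ENNReal.toReal_mono (specRadius_ne_top Y) h

lemma sqrt_mul_le_max {a b : ℝ} (ha : 0 ≤ a) (hb : 0 ≤ b) :
    Real.sqrt a * Real.sqrt b ≤ max a b := by
  rcases le_total a b with h | h
  · calc Real.sqrt a * Real.sqrt b ≤ Real.sqrt b * Real.sqrt b :=
        mul_le_mul_of_nonneg_right (Real.sqrt_le_sqrt h) (Real.sqrt_nonneg _)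
      _ = b := Real.mul_self_sqrt hb
      _ ≤ max a b := le_max_right _ _
  · calc Real.sqrt a * Real.sqrt b ≤ Real.sqrt a * Real.sqrt a :=
        mul_le_mul_of_nonneg_left (Real.sqrt_le_sqrt h) (Real.sqrt_nonneg _)
      _ = a := Real.mul_self_sqrt ha
      _ ≤ max a b := le_max_left _ _

lemma specRad_had [Nonempty N] {M : Matrix N N ℝ} (hM : ∀ i j, 0 ≤ M i j) :
    specRad (hadPow M (1/2) ⊙ hadPow Mᵀ (1/2)) ≤ specRad M := by
  set S := hadPow M (1/2) ⊙ hadPow Mᵀ (1/2) with hSdef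
  have hMt : ∀ i j, 0 ≤ Mᵀ i j := fun i j => hM j i
  have hSij : ∀ i j, S i j = Real.sqrt (M i j) * Real.sqrt (Mᵀ i j) := by
    intro i j
    simp only [hSdef, Matrix.hadamard_apply, hadPow, Real.sqrt_eq_rpow]
  have hS0 : ∀ i j, 0 ≤ S i j := fun i j => (hSij i j).symm ▸
    mul_nonneg (Real.sqrt_nonneg _) (Real.sqrt_nonneg _)
  have key : ∀ n : ℕ, ‖(cmap S) ^ n‖₊ ≤ max ‖(cmap M) ^ n‖₊ ‖(cmap Mᵀ) ^ n‖₊ := by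
    intro n
    cases n with
    | zero => simp
    | succ k =>
      rw [← cmap_pow, ← cmap_pow, ← cmap_pow]
      set a := ‖cmap (M ^ (k+1))‖₊
      set b := ‖cmap (Mᵀ ^ (k+1))‖₊
      refine nnnorm_le_of_rowsum_le (pow_entry_nonneg hS0 k) fun i => ?_
      have h1 : ∑ j, (S ^ (k+1)) i j ≤
          ∑ j, Real.sqrt ((M ^ (k+1)) i j) * Real.sqrt (((Mᵀ) ^ (k+1)) i j) :=
        Finset.sum_le_sum fun j _ =>
          had_pow_le hM hS0 (fun i j => (hSij i j).le) k i j
      have h2 := cs_sqrt Finset.univ (fun j => (M ^ (k+1)) i j) (fun j => ((Mᵀ) ^ (k+1)) i j)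
        (fun j => pow_entry_nonneg hM k i j) (fun j => pow_entry_nonneg hMt k i j)
      have h3 : Real.sqrt (∑ j, (M ^ (k+1)) i j) * Real.sqrt (∑ j, ((Mᵀ) ^ (k+1)) i j) ≤
          Real.sqrt (a : ℝ) * Real.sqrt (b : ℝ) :=
        mul_le_mul (Real.sqrt_le_sqrt (rowsum_le_nnnorm (pow_entry_nonneg hM k) i))
          (Real.sqrt_le_sqrt (rowsum_le_nnnorm (pow_entry_nonneg hMt k) i))
          (Real.sqrt_nonneg _) (Real.sqrt_nonneg _)
      have h4 : Real.sqrt (a : ℝ) * Real.sqrt (b : ℝ) ≤ ((max a b : ℝ≥0) : ℝ) := by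
        rw [NNReal.coe_max]
        exact sqrt_mul_le_max a.coe_nonneg b.coe_nonneg
      exact (h1.trans (h2.trans (h3.trans h4)))
  have hlim : Tendsto (fun n : ℕ =>
      max ((‖(cmap M) ^ n‖₊ : ℝ≥0∞) ^ (1/n : ℝ)) ((‖(cmap Mᵀ) ^ n‖₊ : ℝ≥0∞) ^ (1/n : ℝ)))
      atTop (𝓝 (spectralRadius ℂ (cmap M))) := by
    have := (gelfand M).max (gelfand (N := N) Mᵀ)
    rwa [specRadius_transpose, max_self] at this
  have h : spectralRadius ℂ (cmap S) ≤ spectralRadius ℂ (cmap M) := by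
    refine le_of_tendsto_of_tendsto' (gelfand S) hlim fun n => ?_
    have hc : (‖(cmap S) ^ n‖₊ : ℝ≥0∞) ≤
        max (‖(cmap M) ^ n‖₊ : ℝ≥0∞) (‖(cmap Mᵀ) ^ n‖₊ : ℝ≥0∞) := by
      have := key n
      rcases le_total (‖(cmap M) ^ n‖₊) (‖(cmap Mᵀ) ^ n‖₊) with h' | h'
      · rw [max_eq_right h'] at this
        exact le_max_of_le_right (by exact_mod_cast this)
      · rw [max_eq_left h'] at this
        exact le_max_of_le_left (by exact_mod_cast this)
    calc (‖(cmap S) ^ n‖₊ : ℝ≥0∞) ^ (1/n : ℝ)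
        ≤ (max (‖(cmap M) ^ n‖₊ : ℝ≥0∞) (‖(cmap Mᵀ) ^ n‖₊ : ℝ≥0∞)) ^ (1/n : ℝ) :=
          ENNReal.rpow_le_rpow hc (by positivity)
      _ ≤ _ := by
          rcases le_total ((‖(cmap M) ^ n‖₊ : ℝ≥0∞)) ((‖(cmap Mᵀ) ^ n‖₊ : ℝ≥0∞)) with h' | h'
          · rw [max_eq_right h']; exact le_max_right _ _
          · rw [max_eq_left h']; exact le_max_left _ _
  exact ENNReal.toReal_mono (specRadius_ne_top M) h

section L2
open scoped Matrix.Norms.L2Operator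

lemma l2OpNorm_eq_scoped (X : Matrix N N ℝ) : l2OpNorm X = ‖X‖ :=
  (Matrix.cstar_norm_def X).symm

lemma l2OpNorm_nonneg (X : Matrix N N ℝ) : 0 ≤ l2OpNorm X := by
  rw [l2OpNorm_eq_scoped]; exact norm_nonneg _

lemma l2_pow_two_pow {D : Matrix N N ℝ} (hsym : Dᵀ = D) (j : ℕ) :
    l2OpNorm (D ^ (2 ^ j)) = l2OpNorm D ^ (2 ^ j) := by
  induction j with
  | zero => simp
  | succ j ih =>
    have hpowsym : (D ^ (2 ^ j))ᵀ = D ^ (2 ^ j) := by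
      rw [Matrix.transpose_pow, hsym]
    have h1 : D ^ (2 ^ (j+1)) = (D ^ (2 ^ j))ᴴ * (D ^ (2 ^ j)) := by
      rw [Matrix.conjTranspose_eq_transpose_of_trivial, hpowsym, ← sq, ← pow_mul,
        pow_succ]
    rw [l2OpNorm_eq_scoped, h1, Matrix.l2_opNorm_conjTranspose_mul_self,
      ← l2OpNorm_eq_scoped, ih, ← pow_add]
    congr 1
    ring

end L2

lemma l2OpNorm_le_of_rowcol {D : Matrix N N ℝ} (hD : ∀ i j, 0 ≤ D i j) {r : ℝ}
    (hr : 0 ≤ r) (hrow : ∀ i, ∑ j, D i j ≤ r) (hcol : ∀ j, ∑ i, D i j ≤ r) :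
    l2OpNorm D ≤ r := by
  show ‖Matrix.toEuclideanCLM (𝕜 := ℝ) D‖ ≤ r
  refine ContinuousLinearMap.opNorm_le_bound _ hr fun v => ?_
  have hv : ∀ w : EuclideanSpace ℝ N, ‖w‖ = Real.sqrt (∑ i, (w i) ^ 2) := by
    intro w
    rw [EuclideanSpace.norm_eq]
    congr 1
    exact Finset.sum_congr rfl fun i _ => by rw [Real.norm_eq_abs, sq_abs]
  have happ : ∀ i, ((Matrix.toEuclideanCLM (𝕜 := ℝ) D) v) i = ∑ j, D i j * v j :=
    fun i => rfl
  rw [hv, hv]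
  have key : ∑ i, (∑ j, D i j * v j) ^ 2 ≤ r ^ 2 * ∑ j, (v j) ^ 2 := by
    have step1 : ∀ i, (∑ j, D i j * v j) ^ 2 ≤ r * ∑ j, D i j * (v j) ^ 2 := by
      intro i
      have cs := Finset.sum_sq_le_sum_mul_sum_of_sq_eq_mul Finset.univ
        (r := fun j => D i j * v j) (f := fun j => D i j) (g := fun j => D i j * (v j) ^ 2)
        (fun j _ => hD i j) (fun j _ => mul_nonneg (hD i j) (sq_nonneg _))
        (fun j _ => by ring)
      calc (∑ j, D i j * v j) ^ 2 ≤ (∑ j, D i j) * ∑ j, D i j * (v j) ^ 2 := cs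
        _ ≤ r * ∑ j, D i j * (v j) ^ 2 :=
          mul_le_mul_of_nonneg_right (hrow i)
            (Finset.sum_nonneg fun j _ => mul_nonneg (hD i j) (sq_nonneg _))
    calc ∑ i, (∑ j, D i j * v j) ^ 2 ≤ ∑ i, r * ∑ j, D i j * (v j) ^ 2 :=
          Finset.sum_le_sum fun i _ => step1 i
      _ = r * ∑ j, (∑ i, D i j) * (v j) ^ 2 := by
          rw [← Finset.mul_sum, Finset.sum_comm]
          congr 1
          exact Finset.sum_congr rfl fun j _ => by rw [Finset.sum_mul]
      _ ≤ r * ∑ j, r * (v j) ^ 2 := by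
          refine mul_le_mul_of_nonneg_left (Finset.sum_le_sum fun j _ =>
            mul_le_mul_of_nonneg_right (hcol j) (sq_nonneg _)) hr
      _ = r ^ 2 * ∑ j, (v j) ^ 2 := by rw [← Finset.mul_sum]; ring
  calc Real.sqrt (∑ i, (((Matrix.toEuclideanCLM (𝕜 := ℝ) D) v) i) ^ 2)
      = Real.sqrt (∑ i, (∑ j, D i j * v j) ^ 2) := by congr 1
    _ ≤ Real.sqrt (r ^ 2 * ∑ j, (v j) ^ 2) := Real.sqrt_le_sqrt key
    _ = r * Real.sqrt (∑ j, (v j) ^ 2) := by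
        rw [Real.sqrt_mul (sq_nonneg r), Real.sqrt_sq hr]


lemma pow_entry_nonneg' {X : Matrix N N ℝ} (hX : ∀ i j, 0 ≤ X i j) (n : ℕ) :
    ∀ i j, 0 ≤ (X ^ n) i j := by
  cases n with
  | zero =>
    intro i j
    simp only [pow_zero]
    rw [Matrix.one_apply]
    split <;> norm_num
  | succ k => exact pow_entry_nonneg hX k

section Spec2
open scoped ENNReal NNReal Topology
open Filter
attribute [local instance] Matrix.linftyOpNormedRing Matrix.linftyOpNormedAlgebra
  Matrix.linfty_opNormOneClass

lemma l2_le_specRad [Nonempty N] {D : Matrix N N ℝ} (hD : ∀ i j, 0 ≤ D i j)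
    (hsym : Dᵀ = D) : l2OpNorm D ≤ specRad D := by
  set t := l2OpNorm D with ht
  have ht0 : 0 ≤ t := l2OpNorm_nonneg D
  have claim : ∀ j : ℕ, t ^ (2 ^ j) ≤ ((‖cmap (D ^ (2 ^ j))‖₊ : ℝ≥0) : ℝ) := by
    intro j
    rw [ht, ← l2_pow_two_pow hsym j]
    have hpownn := pow_entry_nonneg' hD (2 ^ j)
    have hpowsym : (D ^ (2 ^ j))ᵀ = D ^ (2 ^ j) := by rw [Matrix.transpose_pow, hsym]
    refine l2OpNorm_le_of_rowcol hpownn (NNReal.coe_nonneg _)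
      (fun i => rowsum_le_nnnorm hpownn i) (fun j' => ?_)
    have : ∑ i, (D ^ (2 ^ j)) i j' = ∑ i, (D ^ (2 ^ j)) j' i :=
      Finset.sum_congr rfl fun i _ => by
        conv_lhs => rw [← hpowsym]
        rfl
    rw [this]
    exact rowsum_le_nnnorm hpownn j'
  have hsub : Tendsto (fun j : ℕ => (‖(cmap D) ^ (2 ^ j)‖₊ : ℝ≥0∞) ^ (1 / (2 ^ j : ℕ) : ℝ))
      atTop (𝓝 (spectralRadius ℂ (cmap D))) := by
    refine (gelfand D).comp ?_
    exact tendsto_atTop_mono (fun j => (Nat.lt_two_pow_self (n := j)).le) tendsto_id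
  have hpt : ∀ j : ℕ, ENNReal.ofReal t ≤ (‖(cmap D) ^ (2 ^ j)‖₊ : ℝ≥0∞) ^ (1 / (2 ^ j : ℕ) : ℝ) := by
    intro j
    have h2j : (0:ℝ) < (2 ^ j : ℕ) := by positivity
    have hreal : t ≤ ((‖cmap (D ^ (2 ^ j))‖₊ : ℝ≥0) : ℝ) ^ (1 / (2 ^ j : ℕ) : ℝ) := by
      have := Real.rpow_le_rpow (by positivity) (claim j) (le_of_lt (by positivity :
        (0:ℝ) < 1 / (2 ^ j : ℕ)))
      calc t = (t ^ (2 ^ j : ℕ)) ^ (1 / (2 ^ j : ℕ) : ℝ) := by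
            rw [← Real.rpow_natCast t (2 ^ j), ← Real.rpow_mul ht0,
              mul_one_div_cancel (ne_of_gt h2j), Real.rpow_one]
        _ ≤ _ := this
    rw [← cmap_pow]
    rw [← ENNReal.coe_rpow_of_nonneg _ (le_of_lt (by positivity : (0:ℝ) < 1 / (2 ^ j : ℕ)))]
    refine (ENNReal.ofReal_le_iff_le_toReal ENNReal.coe_ne_top).mpr ?_
    rw [ENNReal.coe_toReal, NNReal.coe_rpow]
    exact hreal
  have h := le_of_tendsto_of_tendsto' (tendsto_const_nhds (x := ENNReal.ofReal t)) hsub hpt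
  rw [specRad_eq]
  exact (ENNReal.ofReal_le_iff_le_toReal (specRadius_ne_top D)).mp h

end Spec2

section L2b
open scoped Matrix.Norms.L2Operator

lemma l2_sq (C : Matrix N N ℝ) : l2OpNorm (Cᵀ * C) = l2OpNorm C * l2OpNorm C := by
  rw [l2OpNorm_eq_scoped, ← Matrix.conjTranspose_eq_transpose_of_trivial,
    Matrix.l2_opNorm_conjTranspose_mul_self, ← l2OpNorm_eq_scoped]

end L2b

end Spec

end Helpers

theorem stmt13 {N : Type*} [Fintype N] [DecidableEq N] (A B : Matrix N N ℝ)
    (hA : ∀ i j, 0 ≤ A i j) (hB : ∀ i j, 0 ≤ B i j) :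
    l2OpNorm (hadPow A (1/2) ⊙ hadPow B (1/2)) ≤
        specRad (hadPow (Aᵀ * B) (1/2) ⊙ hadPow (Bᵀ * A) (1/2)) ^ ((1 : ℝ) / 2) ∧
      specRad (hadPow (Aᵀ * B) (1/2) ⊙ hadPow (Bᵀ * A) (1/2)) ^ ((1 : ℝ) / 2) ≤
        specRad (Aᵀ * B) ^ ((1 : ℝ) / 2) := by
  have hspec_nonneg : ∀ X : Matrix N N ℝ, 0 ≤ specRad X := fun X => ENNReal.toReal_nonneg
  rcases isEmpty_or_nonempty N with hN | hN
  · constructor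
    · have : (Matrix.toEuclideanCLM (𝕜 := ℝ) (hadPow A (1/2) ⊙ hadPow B (1/2))) = 0 :=
        Subsingleton.elim _ _
      have h0 : l2OpNorm (hadPow A (1/2) ⊙ hadPow B (1/2)) = 0 := by
        show ‖Matrix.toEuclideanCLM (𝕜 := ℝ) (hadPow A (1/2) ⊙ hadPow B (1/2))‖ = 0
        rw [this, norm_zero]
      rw [h0]
      exact Real.rpow_nonneg (hspec_nonneg _) _
    · have : (hadPow (Aᵀ * B) (1/2) ⊙ hadPow (Bᵀ * A) (1/2)) = Aᵀ * B :=
        Matrix.ext fun i _ => hN.elim i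
      rw [this]
  · -- main case
    set M := Aᵀ * B with hM
    have hAt : ∀ i j, 0 ≤ Aᵀ i j := fun i j => hA j i
    have hBt : ∀ i j, 0 ≤ Bᵀ i j := fun i j => hB j i
    have hM0 : ∀ i j, 0 ≤ M i j := mul_entry_nonneg hAt hB
    have hMt : Mᵀ = Bᵀ * A := by
      rw [hM, Matrix.transpose_mul, Matrix.transpose_transpose]
    set C := hadPow A (1/2) ⊙ hadPow B (1/2) with hC
    set D := hadPow M (1/2) ⊙ hadPow (Bᵀ * A) (1/2) with hD
    have hDM : D = hadPow M (1/2) ⊙ hadPow Mᵀ (1/2) := by rw [hMt]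
    have hDij : ∀ i j, D i j = Real.sqrt (M i j) * Real.sqrt (Mᵀ i j) := by
      intro i j
      rw [hDM]
      simp only [Matrix.hadamard_apply, hadPow, Real.sqrt_eq_rpow]
    have hD0 : ∀ i j, 0 ≤ D i j := fun i j => (hDij i j).symm ▸
      mul_nonneg (Real.sqrt_nonneg _) (Real.sqrt_nonneg _)
    have hCij : ∀ i j, C i j = Real.sqrt (A i j) * Real.sqrt (B i j) := by
      intro i j
      simp only [hC, Matrix.hadamard_apply, hadPow, Real.sqrt_eq_rpow]
    -- second inequality
    have h2 : specRad D ≤ specRad M := by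
      rw [hDM]; exact specRad_had hM0
    refine ⟨?_, Real.rpow_le_rpow (hspec_nonneg _) h2 (by norm_num)⟩
    -- first inequality
    have hCC : ∀ i j, (Cᵀ * C) i j ≤ D i j := by
      intro i j
      rw [Matrix.mul_apply]
      have hterm : ∀ k, Cᵀ i k * C k j =
          Real.sqrt (A k i * B k j) * Real.sqrt (B k i * A k j) := by
        intro k
        rw [Matrix.transpose_apply, hCij, hCij, Real.sqrt_mul (hA k i),
          Real.sqrt_mul (hB k i)]
        ring
      rw [Finset.sum_congr rfl fun k _ => hterm k]
      have hcs := cs_sqrt Finset.univ (fun k => A k i * B k j) (fun k => B k i * A k j)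
        (fun k => mul_nonneg (hA k i) (hB k j)) (fun k => mul_nonneg (hB k i) (hA k j))
      have hsum1 : ∑ k, A k i * B k j = M i j := by
        rw [hM, Matrix.mul_apply]
        exact Finset.sum_congr rfl fun k _ => rfl
      have hsum2 : ∑ k, B k i * A k j = Mᵀ i j := by
        rw [hMt, Matrix.mul_apply]
        exact Finset.sum_congr rfl fun k _ => rfl
      rw [hsum1, hsum2] at hcs
      rw [hDij]
      exact hcs
    have hCe : ∀ i j, 0 ≤ C i j := fun i j => (hCij i j).symm ▸
      mul_nonneg (Real.sqrt_nonneg _) (Real.sqrt_nonneg _)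
    have hCtC0 : ∀ i j, 0 ≤ (Cᵀ * C) i j :=
      mul_entry_nonneg (fun i j => hCe j i) hCe
    have hCtCsym : (Cᵀ * C)ᵀ = Cᵀ * C := by
      rw [Matrix.transpose_mul, Matrix.transpose_transpose]
    have key : l2OpNorm C * l2OpNorm C ≤ specRad D := by
      calc l2OpNorm C * l2OpNorm C = l2OpNorm (Cᵀ * C) := (l2_sq C).symm
        _ ≤ specRad (Cᵀ * C) := l2_le_specRad hCtC0 hCtCsym
        _ ≤ specRad D := specRad_mono hCtC0 hCC
    have hC0 : 0 ≤ l2OpNorm C := l2OpNorm_nonneg C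
    calc l2OpNorm C = Real.sqrt (l2OpNorm C * l2OpNorm C) := (Real.sqrt_mul_self hC0).symm
      _ ≤ Real.sqrt (specRad D) := Real.sqrt_le_sqrt key
      _ = specRad D ^ ((1:ℝ)/2) := Real.sqrt_eq_rpow _
end

section
/- Let A and B be nonnegative n×n real matrices and α ≥ 1/2. Then ‖A^{(α)} ∘ B^{(α)}‖ ≤ ρ((AᵀB)^{(α)} ∘ (BᵀA)^{(α)})^{1/2} ≤ ρ(AᵀB)^α, where ‖·‖ is the Euclidean operator norm. -/
open Matrix

section Aux

open Finset

private lemma rpow_add_le_real {a b : ℝ} (ha : 0 ≤ a) (hb : 0 ≤ b) {p : ℝ} (hp : 1 ≤ p) :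
    a ^ p + b ^ p ≤ (a + b) ^ p := by
  lift a to NNReal using ha
  lift b to NNReal using hb
  have := NNReal.add_rpow_le_rpow_add a b hp
  exact_mod_cast this

private lemma sum_rpow_le' {ι : Type*} (s : Finset ι) (f : ι → ℝ) (hf : ∀ i, 0 ≤ f i)
    {p : ℝ} (hp : 1 ≤ p) : ∑ i ∈ s, f i ^ p ≤ (∑ i ∈ s, f i) ^ p := by
  induction s using Finset.cons_induction with
  | empty => simp [Real.zero_rpow (by linarith : p ≠ 0)]
  | cons a s ha ih =>
    rw [Finset.sum_cons, Finset.sum_cons]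
    calc f a ^ p + ∑ i ∈ s, f i ^ p ≤ f a ^ p + (∑ i ∈ s, f i) ^ p := by gcongr
      _ ≤ (f a + ∑ i ∈ s, f i) ^ p :=
          rpow_add_le_real (hf a) (Finset.sum_nonneg fun i _ => hf i) hp

private lemma rpow_half_mul {x z : ℝ} (hx : 0 ≤ x) (hz : 0 ≤ z) {γ : ℝ} :
    Real.sqrt (x ^ (2*γ) * z ^ (2*γ)) = x ^ γ * z ^ γ := by
  rw [← Real.mul_rpow hx hz, Real.sqrt_eq_rpow, ← Real.rpow_mul (mul_nonneg hx hz)]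
  have h : 2*γ*(1/2 : ℝ) = γ := by ring
  rw [h, Real.mul_rpow hx hz]

private lemma nnnorm_ofReal' (a : ℝ) : ‖(Complex.ofReal a)‖₊ = ‖a‖₊ :=
  NNReal.coe_injective (by simp [RCLike.norm_ofReal, Real.norm_eq_abs])

variable {N : Type*} [Fintype N] [DecidableEq N]

private lemma pow_nonneg_entry {X : Matrix N N ℝ} (hX : ∀ i j, 0 ≤ X i j) (k : ℕ) :
    ∀ i j, 0 ≤ (X ^ k) i j := by
  induction k with
  | zero => intro i j; rw [pow_zero]; by_cases h : i = j <;> simp [Matrix.one_apply, h]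
  | succ k ih =>
    intro i j
    rw [pow_succ, Matrix.mul_apply]
    exact Finset.sum_nonneg fun l _ => mul_nonneg (ih i l) (hX l j)

private lemma pow_le_sqrt {D E : Matrix N N ℝ} (hD : ∀ i j, 0 ≤ D i j)
    (hE : ∀ i j, 0 ≤ E i j)
    (h : ∀ i j, D i j ≤ Real.sqrt (E i j * E j i)) (k : ℕ) :
    ∀ i j, (D ^ k) i j ≤ Real.sqrt ((E ^ k) i j * (E ^ k) j i) := by
  induction k with
  | zero =>
    intro i j
    rw [pow_zero]
    by_cases hij : i = j
    · subst hij; simp [Matrix.one_apply_eq]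
    · simp [Matrix.one_apply_ne hij, Real.sqrt_nonneg]
  | succ k ih =>
    intro i j
    have hEk := pow_nonneg_entry hE k
    rw [pow_succ, Matrix.mul_apply]
    have key : ∀ l, (D ^ k) i l * D l j ≤
        Real.sqrt ((E ^ k) i l * E l j) * Real.sqrt (E j l * (E ^ k) l i) := by
      intro l
      have h1 : (D ^ k) i l * D l j ≤
          Real.sqrt ((E ^ k) i l * (E ^ k) l i) * Real.sqrt (E l j * E j l) :=
        mul_le_mul (ih i l) (h l j) (hD l j) (Real.sqrt_nonneg _)
      refine h1.trans (le_of_eq ?_)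
      rw [← Real.sqrt_mul (mul_nonneg (hEk i l) (hEk l i)),
        ← Real.sqrt_mul (mul_nonneg (hEk i l) (hE l j))]
      ring_nf
    calc ∑ l, (D ^ k) i l * D l j
        ≤ ∑ l, Real.sqrt ((E ^ k) i l * E l j) * Real.sqrt (E j l * (E ^ k) l i) :=
          Finset.sum_le_sum fun l _ => key l
      _ ≤ Real.sqrt (∑ l, (E ^ k) i l * E l j) * Real.sqrt (∑ l, E j l * (E ^ k) l i) :=
          Real.sum_sqrt_mul_sqrt_le _ (fun l => mul_nonneg (hEk i l) (hE l j))
            (fun l => mul_nonneg (hE j l) (hEk l i))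
      _ = Real.sqrt ((E ^ (k+1)) i j * (E ^ (k+1)) j i) := by
          have e1 : (∑ l, (E ^ k) i l * E l j) = (E ^ (k+1)) i j := by
            rw [pow_succ, Matrix.mul_apply]
          have e2 : (∑ l, E j l * (E ^ k) l i) = (E ^ (k+1)) j i := by
            rw [pow_succ', Matrix.mul_apply]
          rw [e1, e2, ← Real.sqrt_mul (pow_nonneg_entry hE (k+1) i j)]

private lemma pow_hadPow_le {M : Matrix N N ℝ} (hM : ∀ i j, 0 ≤ M i j) {β : ℝ} (hβ : 1 ≤ β)
    (k : ℕ) : ∀ i j, ((hadPow M β) ^ k) i j ≤ ((M ^ k) i j) ^ β := by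
  induction k with
  | zero =>
    intro i j
    rw [pow_zero, pow_zero]
    by_cases hij : i = j
    · subst hij; simp [Matrix.one_apply_eq]
    · simp [Matrix.one_apply_ne hij, Real.zero_rpow (by linarith : β ≠ 0)]
  | succ k ih =>
    intro i j
    rw [pow_succ, pow_succ, Matrix.mul_apply, Matrix.mul_apply]
    have hEk : ∀ i j, 0 ≤ ((hadPow M β) ^ k) i j :=
      pow_nonneg_entry (fun i j => Real.rpow_nonneg (hM i j) β) k
    calc ∑ l, ((hadPow M β) ^ k) i l * hadPow M β l j
        ≤ ∑ l, ((M ^ k) i l) ^ β * (M l j) ^ β := by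
          apply Finset.sum_le_sum
          intro l _
          exact mul_le_mul_of_nonneg_right (ih i l) (Real.rpow_nonneg (hM l j) β)
      _ = ∑ l, ((M ^ k) i l * M l j) ^ β := by
          refine Finset.sum_congr rfl fun l _ => ?_
          rw [Real.mul_rpow (pow_nonneg_entry hM k i l) (hM l j)]
      _ ≤ (∑ l, (M ^ k) i l * M l j) ^ β :=
          sum_rpow_le' _ _ (fun l => mul_nonneg (pow_nonneg_entry hM k i l) (hM l j)) hβ

section frob

attribute [local instance] Matrix.frobeniusSeminormedAddCommGroup
  Matrix.frobeniusNormedAddCommGroup Matrix.frobeniusNormedRing Matrix.frobeniusNormedAlgebra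

private lemma map_pow_ofReal (X : Matrix N N ℝ) (k : ℕ) :
    (X.map Complex.ofReal) ^ k = (X ^ k).map Complex.ofReal := by
  have h1 : X.map Complex.ofReal = Complex.ofRealHom.mapMatrix X := rfl
  have h2 : (X ^ k).map Complex.ofReal = Complex.ofRealHom.mapMatrix (X ^ k) := rfl
  rw [h1, h2, map_pow]

private lemma norm_le_of_sqrt {X P : Matrix N N ℝ} {β : ℝ} (hβ : 1 ≤ β)
    (hX : ∀ i j, 0 ≤ X i j) (hP : ∀ i j, 0 ≤ P i j)
    (h : ∀ i j, X i j ≤ Real.sqrt (P i j ^ β * P j i ^ β)) :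
    ‖X‖ ≤ ‖P‖ ^ β := by
  rw [Matrix.frobenius_norm_def, Matrix.frobenius_norm_def]
  have hS : (0:ℝ) ≤ ∑ i, ∑ j, ‖P i j‖ ^ (2:ℝ) :=
    Finset.sum_nonneg fun i _ => Finset.sum_nonneg fun j _ => Real.rpow_nonneg (norm_nonneg _) _
  have hprod : (∑ p : N × N, P p.1 p.2 ^ (2:ℝ)) = ∑ i, ∑ j, P i j ^ (2:ℝ) :=
    Fintype.sum_prod_type (f := fun p : N × N => P p.1 p.2 ^ (2:ℝ))
  have hSeq : (∑ i, ∑ j, ‖P i j‖ ^ (2:ℝ)) = ∑ p : N × N, P p.1 p.2 ^ (2:ℝ) := by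
    rw [hprod]
    exact Finset.sum_congr rfl fun i _ => Finset.sum_congr rfl fun j _ => by
      rw [Real.norm_of_nonneg (hP i j)]
  have step1 : (∑ i, ∑ j, ‖X i j‖ ^ (2:ℝ)) ≤ (∑ i, ∑ j, ‖P i j‖ ^ (2:ℝ)) ^ β := by
    have e1 : ∀ i j, ‖X i j‖ ^ (2:ℝ) ≤ P i j ^ β * P j i ^ β := by
      intro i j
      rw [Real.norm_of_nonneg (hX i j), Real.rpow_two]
      calc X i j ^ 2 ≤ Real.sqrt (P i j ^ β * P j i ^ β) ^ 2 :=
            pow_le_pow_left₀ (hX i j) (h i j) 2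
        _ = P i j ^ β * P j i ^ β := Real.sq_sqrt
            (mul_nonneg (Real.rpow_nonneg (hP i j) β) (Real.rpow_nonneg (hP j i) β))
    calc (∑ i, ∑ j, ‖X i j‖ ^ (2:ℝ)) ≤ ∑ i, ∑ j, P i j ^ β * P j i ^ β :=
          Finset.sum_le_sum fun i _ => Finset.sum_le_sum fun j _ => e1 i j
      _ = ∑ p : N × N, P p.1 p.2 ^ β * P p.2 p.1 ^ β :=
          (Fintype.sum_prod_type (f := fun p : N × N => P p.1 p.2 ^ β * P p.2 p.1 ^ β)).symm
      _ ≤ Real.sqrt (∑ p : N × N, (P p.1 p.2 ^ β) ^ 2) *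
            Real.sqrt (∑ p : N × N, (P p.2 p.1 ^ β) ^ 2) :=
          Real.sum_mul_le_sqrt_mul_sqrt _ _ _
      _ = ∑ p : N × N, (P p.1 p.2 ^ β) ^ 2 := by
          have e3 : (∑ p : N × N, (P p.2 p.1 ^ β) ^ 2) = ∑ p : N × N, (P p.1 p.2 ^ β) ^ 2 :=
            Fintype.sum_equiv (Equiv.prodComm N N) _ _ (fun p => rfl)
          rw [e3, Real.mul_self_sqrt (Finset.sum_nonneg fun p _ => sq_nonneg _)]
      _ ≤ (∑ i, ∑ j, ‖P i j‖ ^ (2:ℝ)) ^ β := by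
          rw [hSeq]
          have e4 : ∀ p : N × N, (P p.1 p.2 ^ β) ^ 2 = (P p.1 p.2 ^ (2:ℝ)) ^ β := by
            intro p
            rw [← Real.rpow_two, ← Real.rpow_mul (hP p.1 p.2), ← Real.rpow_mul (hP p.1 p.2),
              mul_comm]
          refine le_trans (le_of_eq (Fintype.sum_congr
            (fun p : N × N => (P p.1 p.2 ^ β) ^ 2)
            (fun p : N × N => (P p.1 p.2 ^ (2:ℝ)) ^ β) e4)) ?_
          exact sum_rpow_le' _ (fun p : N × N => P p.1 p.2 ^ (2:ℝ))
            (fun p => Real.rpow_nonneg (hP p.1 p.2) _) hβ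
  calc (∑ i, ∑ j, ‖X i j‖ ^ (2:ℝ)) ^ ((1:ℝ)/2)
      ≤ ((∑ i, ∑ j, ‖P i j‖ ^ (2:ℝ)) ^ β) ^ ((1:ℝ)/2) :=
        Real.rpow_le_rpow (Finset.sum_nonneg fun i _ => Finset.sum_nonneg fun j _ =>
          Real.rpow_nonneg (norm_nonneg _) _) step1 (by norm_num)
    _ = ((∑ i, ∑ j, ‖P i j‖ ^ (2:ℝ)) ^ ((1:ℝ)/2)) ^ β := by
        rw [← Real.rpow_mul hS, ← Real.rpow_mul hS, mul_comm]

private lemma specRad_le_rpow_of_pow_norm_le {X Y : Matrix N N ℝ} {β : ℝ} (hβ : 1 ≤ β)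
    (h : ∀ k : ℕ, ‖X ^ k‖ ≤ ‖Y ^ k‖ ^ β) : specRad X ≤ specRad Y ^ β := by
  have hβ0 : (0:ℝ) ≤ β := by linarith
  haveI : CompleteSpace (Matrix N N ℂ) := FiniteDimensional.complete ℂ _
  set X' := X.map Complex.ofReal with hX'
  set Y' := Y.map Complex.ofReal with hY'
  have hXk : ∀ k : ℕ, ‖X' ^ k‖₊ = ‖X ^ k‖₊ := fun k => by
    rw [hX', map_pow_ofReal]; exact Matrix.frobenius_nnnorm_map_eq _ _ nnnorm_ofReal'
  have hYk : ∀ k : ℕ, ‖Y' ^ k‖₊ = ‖Y ^ k‖₊ := fun k => by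
    rw [hY', map_pow_ofReal]; exact Matrix.frobenius_nnnorm_map_eq _ _ nnnorm_ofReal'
  have key : ∀ k : ℕ, (‖X' ^ k‖₊ : ENNReal) ^ (1/(k:ℝ)) ≤
      ((‖Y' ^ k‖₊ : ENNReal) ^ (1/(k:ℝ))) ^ β := by
    intro k
    have h1 : (‖X' ^ k‖₊ : ENNReal) ≤ (‖Y' ^ k‖₊ : ENNReal) ^ β := by
      rw [hXk, hYk, ← ENNReal.coe_rpow_of_nonneg _ hβ0, ENNReal.coe_le_coe,
        ← NNReal.coe_le_coe, NNReal.coe_rpow, coe_nnnorm, coe_nnnorm]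
      exact h k
    calc (‖X' ^ k‖₊ : ENNReal) ^ (1/(k:ℝ)) ≤ ((‖Y' ^ k‖₊ : ENNReal) ^ β) ^ (1/(k:ℝ)) :=
          ENNReal.rpow_le_rpow h1 (by positivity)
      _ = _ := by rw [← ENNReal.rpow_mul, ← ENNReal.rpow_mul, mul_comm]
  have t1 := spectrum.pow_nnnorm_pow_one_div_tendsto_nhds_spectralRadius X'
  have t2 := (ENNReal.continuous_rpow_const (y := β)).continuousAt.tendsto.comp
    (spectrum.pow_nnnorm_pow_one_div_tendsto_nhds_spectralRadius Y')
  have hle : spectralRadius ℂ X' ≤ (spectralRadius ℂ Y') ^ β :=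
    le_of_tendsto_of_tendsto' t1 t2 key
  have hfin : spectralRadius ℂ Y' ≠ ⊤ := by
    refine ne_top_of_le_ne_top ?_ (spectrum.spectralRadius_le_pow_nnnorm_pow_one_div ℂ Y' 0)
    simp only [Nat.cast_zero, zero_add, pow_one, div_one, ENNReal.rpow_one]
    exact ENNReal.mul_ne_top ENNReal.coe_ne_top ENNReal.coe_ne_top
  have hfinal := ENNReal.toReal_mono (ENNReal.rpow_ne_top_of_nonneg hβ0 hfin) hle
  rwa [← ENNReal.toReal_rpow] at hfinal

end frob

private lemma quad_le_specRad (D : Matrix N N ℝ) (hsym : ∀ i j, D i j = D j i) (y : N → ℝ) :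
    ∑ j, ∑ k, y j * D j k * y k ≤ specRad D * ∑ j, (y j)^2 := by
  set D' := D.map Complex.ofReal with hD'
  set a := Matrix.toEuclideanCLM (𝕜 := ℂ) D' with ha'
  have hstar : star D' = D' := by
    rw [Matrix.star_eq_conjTranspose]
    ext i j
    simp only [Matrix.conjTranspose_apply, hD', Matrix.map_apply, Complex.star_def,
      Complex.conj_ofReal]
    rw [hsym j i]
  have ha : IsSelfAdjoint a := by
    rw [_root_.IsSelfAdjoint, ha', ← map_star, hstar]
  have hspec : spectrum ℂ a = spectrum ℂ D' :=
    AlgEquiv.spectrum_eq (Matrix.toEuclideanCLM (𝕜 := ℂ) (n := N)) D'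
  have hnorm : specRad D = ‖a‖ := by
    unfold specRad
    rw [← hD']
    unfold spectralRadius
    rw [← hspec]
    have h2 := ha.spectralRadius_eq_nnnorm
    unfold spectralRadius at h2
    rw [h2]
    rfl
  set v : N → ℂ := fun i => (y i : ℂ) with hv
  set y' : EuclideanSpace ℂ N := (WithLp.equiv 2 (N → ℂ)).symm v with hy'
  have hay : a y' = (WithLp.equiv 2 (N → ℂ)).symm (D'.mulVec v) := by
    rw [hy', ha']; rfl
  have hip : (inner ℂ y' (a y') : ℂ) = ((∑ j, ∑ k, y j * D j k * y k : ℝ) : ℂ) := by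
    rw [hay]
    simp only [hy', PiLp.inner_apply, RCLike.inner_apply, WithLp.equiv_symm_apply, PiLp.toLp_apply, hv,
      Matrix.mulVec, dotProduct, hD', Matrix.map_apply, Complex.conj_ofReal]
    push_cast
    rw [Finset.sum_congr rfl (fun i _ => Finset.sum_mul (Finset.univ : Finset N)
      (fun j => ((D i j : ℂ)) * (y j : ℂ)) ((y i : ℂ)))]
    exact Finset.sum_congr rfl fun i _ => Finset.sum_congr rfl fun j _ => by ring
  have hny : ‖y'‖^2 = ∑ j, (y j)^2 := by
    rw [EuclideanSpace.norm_eq, Real.sq_sqrt (Finset.sum_nonneg fun i _ => sq_nonneg _)]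
    refine Finset.sum_congr rfl fun i _ => ?_
    rw [hy', WithLp.equiv_symm_apply, PiLp.toLp_apply, hv]
    show ‖((y i : ℝ) : ℂ)‖ ^ 2 = y i ^ 2
    rw [Complex.norm_real, Real.norm_eq_abs, sq_abs]
  calc ∑ j, ∑ k, y j * D j k * y k
      ≤ ‖((∑ j, ∑ k, y j * D j k * y k : ℝ) : ℂ)‖ :=
        (le_abs_self _).trans (le_of_eq (by
          rw [Complex.norm_real, Real.norm_eq_abs]))
    _ = ‖(inner ℂ y' (a y') : ℂ)‖ := by rw [hip]
    _ ≤ ‖y'‖ * ‖a y'‖ := norm_inner_le_norm _ _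
    _ ≤ ‖y'‖ * (‖a‖ * ‖y'‖) := by
        have h3 := a.le_opNorm y'
        have h0 : (0:ℝ) ≤ ‖y'‖ := norm_nonneg _
        nlinarith
    _ = ‖a‖ * ‖y'‖^2 := by ring
    _ = specRad D * ∑ j, (y j)^2 := by rw [hnorm, hny]

end Aux

theorem stmt14 {N : Type*} [Fintype N] [DecidableEq N] (A B : Matrix N N ℝ)
    (hA : ∀ i j, 0 ≤ A i j) (hB : ∀ i j, 0 ≤ B i j) (α : ℝ) (hα : (1:ℝ)/2 ≤ α) :
    l2OpNorm (hadPow A α ⊙ hadPow B α) ≤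
        specRad (hadPow (Aᵀ * B) α ⊙ hadPow (Bᵀ * A) α) ^ ((1 : ℝ) / 2) ∧
      specRad (hadPow (Aᵀ * B) α ⊙ hadPow (Bᵀ * A) α) ^ ((1 : ℝ) / 2) ≤
        specRad (Aᵀ * B) ^ α := by
  classical
  have hβ : (1:ℝ) ≤ 2*α := by linarith
  set C := hadPow A α ⊙ hadPow B α with hC
  set D := hadPow (Aᵀ * B) α ⊙ hadPow (Bᵀ * A) α with hD
  set M := Aᵀ * B with hM
  -- basic entrywise facts
  have hMent : ∀ i j, 0 ≤ M i j := by
    intro i j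
    rw [hM, Matrix.mul_apply]
    exact Finset.sum_nonneg fun k _ => mul_nonneg (hA k i) (hB k j)
  have hBAM : ∀ i j, (Bᵀ * A) i j = M j i := by
    intro i j
    rw [hM, Matrix.mul_apply, Matrix.mul_apply]
    exact Finset.sum_congr rfl fun k _ => by
      rw [Matrix.transpose_apply, Matrix.transpose_apply, mul_comm]
  have hDent : ∀ i j, D i j = M i j ^ α * M j i ^ α := by
    intro i j
    rw [hD, Matrix.hadamard_apply]
    show (Aᵀ * B) i j ^ α * (Bᵀ * A) i j ^ α = _
    rw [hBAM, hM]
  have hD0 : ∀ i j, 0 ≤ D i j := fun i j => by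
    rw [hDent]
    exact mul_nonneg (Real.rpow_nonneg (hMent i j) α) (Real.rpow_nonneg (hMent j i) α)
  have hDsym : ∀ i j, D i j = D j i := fun i j => by
    rw [hDent, hDent, mul_comm]
  have hC0 : ∀ i j, 0 ≤ C i j := fun i j => by
    rw [hC, Matrix.hadamard_apply]
    exact mul_nonneg (Real.rpow_nonneg (hA i j) α) (Real.rpow_nonneg (hB i j) α)
  have hρ0 : 0 ≤ specRad D := ENNReal.toReal_nonneg
  have hρM0 : 0 ≤ specRad M := ENNReal.toReal_nonneg
  -- Cauchy–Schwarz entrywise bound : (Cᵀ * C) i j ≤ D i j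
  have hCte : ∀ i j, (Cᵀ * C) i j ≤ D i j := by
    intro i j
    rw [Matrix.mul_apply]
    have expand : ∀ k, Cᵀ i k * C k j =
        Real.sqrt ((A k i * B k j) ^ (2*α)) * Real.sqrt ((B k i * A k j) ^ (2*α)) := by
      intro k
      rw [Matrix.transpose_apply]
      show (A k i ^ α * B k i ^ α) * (A k j ^ α * B k j ^ α) = _
      rw [Real.sqrt_eq_rpow, Real.sqrt_eq_rpow,
        ← Real.rpow_mul (mul_nonneg (hA k i) (hB k j)),
        ← Real.rpow_mul (mul_nonneg (hB k i) (hA k j))]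
      have hexp : 2*α*((1:ℝ)/2) = α := by ring
      rw [hexp, Real.mul_rpow (hA k i) (hB k j), Real.mul_rpow (hB k i) (hA k j)]
      ring
    calc ∑ k, Cᵀ i k * C k j
        = ∑ k, Real.sqrt ((A k i * B k j) ^ (2*α)) * Real.sqrt ((B k i * A k j) ^ (2*α)) :=
          Finset.sum_congr rfl fun k _ => expand k
      _ ≤ Real.sqrt (∑ k, (A k i * B k j) ^ (2*α)) *
            Real.sqrt (∑ k, (B k i * A k j) ^ (2*α)) :=
          Real.sum_sqrt_mul_sqrt_le _
            (fun k => Real.rpow_nonneg (mul_nonneg (hA k i) (hB k j)) _)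
            (fun k => Real.rpow_nonneg (mul_nonneg (hB k i) (hA k j)) _)
      _ ≤ Real.sqrt ((∑ k, A k i * B k j) ^ (2*α)) *
            Real.sqrt ((∑ k, B k i * A k j) ^ (2*α)) := by
          apply mul_le_mul
          · exact Real.sqrt_le_sqrt (sum_rpow_le' _ _
              (fun k => mul_nonneg (hA k i) (hB k j)) hβ)
          · exact Real.sqrt_le_sqrt (sum_rpow_le' _ _
              (fun k => mul_nonneg (hB k i) (hA k j)) hβ)
          · exact Real.sqrt_nonneg _
          · exact Real.sqrt_nonneg _
      _ = D i j := by
          have e1 : (∑ k, A k i * B k j) = M i j := by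
            rw [hM, Matrix.mul_apply]
            exact Finset.sum_congr rfl fun k _ => by rw [Matrix.transpose_apply]
          have e2 : (∑ k, B k i * A k j) = M j i := by
            rw [hM, Matrix.mul_apply]
            exact Finset.sum_congr rfl fun k _ => by
              rw [Matrix.transpose_apply, mul_comm]
          rw [e1, e2, hDent i j, ← rpow_half_mul (hMent i j) (hMent j i),
            Real.sqrt_mul (Real.rpow_nonneg (hMent i j) _)]
  -- Part 1
  have part1 : l2OpNorm C ≤ specRad D ^ ((1:ℝ)/2) := by
    rw [l2OpNorm]
    refine ContinuousLinearMap.opNorm_le_bound _ (Real.rpow_nonneg hρ0 _) fun x => ?_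
    set v : N → ℝ := WithLp.equiv 2 (N → ℝ) x with hv
    have hx : x = (WithLp.equiv 2 (N → ℝ)).symm v := (Equiv.symm_apply_apply _ x).symm
    rw [hx, show ∀ u : N → ℝ, Matrix.toEuclideanCLM (𝕜 := ℝ) C ((WithLp.equiv 2 (N → ℝ)).symm u)
      = (WithLp.equiv 2 (N → ℝ)).symm (C *ᵥ u) from fun u => rfl]
    rw [EuclideanSpace.norm_eq, EuclideanSpace.norm_eq]
    have hre : ∀ i, ‖((WithLp.equiv 2 (N → ℝ)).symm (C.mulVec v)) i‖ ^ 2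
        = ((C.mulVec v) i) ^ 2 := by
      intro i
      rw [WithLp.equiv_symm_apply, PiLp.toLp_apply]
      rw [Real.norm_eq_abs, sq_abs]
    have hre2 : ∀ i, ‖((WithLp.equiv 2 (N → ℝ)).symm v) i‖ ^ 2 = (v i) ^ 2 := by
      intro i
      rw [WithLp.equiv_symm_apply, PiLp.toLp_apply]
      rw [Real.norm_eq_abs, sq_abs]
    rw [Finset.sum_congr rfl fun i _ => hre i, Finset.sum_congr rfl fun i _ => hre2 i]
    set w : N → ℝ := fun j => |v j| with hw
    have hw0 : ∀ j, 0 ≤ w j := fun j => abs_nonneg _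
    have key : (∑ i, ((C.mulVec v) i) ^ 2) ≤ specRad D * ∑ i, (v i)^2 := by
      have step1 : ∀ i, ((C.mulVec v) i) ^ 2 ≤ (∑ j, C i j * w j) ^ 2 := by
        intro i
        have hmv : (C.mulVec v) i = ∑ j, C i j * v j := rfl
        have habs : |∑ j, C i j * v j| ≤ ∑ j, C i j * w j := by
          refine (Finset.abs_sum_le_sum_abs _ _).trans ?_
          refine Finset.sum_le_sum fun j _ => ?_
          rw [abs_mul, abs_of_nonneg (hC0 i j), hw]
        calc ((C.mulVec v) i) ^ 2 = |∑ j, C i j * v j| ^ 2 := by rw [hmv, sq_abs]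
          _ ≤ (∑ j, C i j * w j) ^ 2 := pow_le_pow_left₀ (abs_nonneg _) habs 2
      have step2 : (∑ i, (∑ j, C i j * w j) ^ 2) = ∑ j, ∑ k, w j * (Cᵀ * C) j k * w k := by
        simp_rw [sq, Finset.sum_mul, Finset.mul_sum, Matrix.mul_apply, Matrix.transpose_apply]
        rw [Finset.sum_comm]
        refine Finset.sum_congr rfl fun j _ => ?_
        rw [Finset.sum_comm]
        refine Finset.sum_congr rfl fun k _ => ?_
        rw [Finset.mul_sum, Finset.sum_mul]
        refine Finset.sum_congr rfl fun i _ => by ring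
      have step3 : (∑ j, ∑ k, w j * (Cᵀ * C) j k * w k) ≤ ∑ j, ∑ k, w j * D j k * w k := by
        refine Finset.sum_le_sum fun j _ => Finset.sum_le_sum fun k _ => ?_
        exact mul_le_mul_of_nonneg_right
          (mul_le_mul_of_nonneg_left (hCte j k) (hw0 j)) (hw0 k)
      have step4 := quad_le_specRad D hDsym w
      have hww : (∑ j, (w j)^2) = ∑ j, (v j)^2 :=
        Finset.sum_congr rfl fun j _ => by rw [hw]; exact sq_abs _
      calc (∑ i, ((C.mulVec v) i) ^ 2) ≤ ∑ i, (∑ j, C i j * w j) ^ 2 :=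
            Finset.sum_le_sum fun i _ => step1 i
        _ = ∑ j, ∑ k, w j * (Cᵀ * C) j k * w k := step2
        _ ≤ ∑ j, ∑ k, w j * D j k * w k := step3
        _ ≤ specRad D * ∑ j, (w j)^2 := step4
        _ = specRad D * ∑ j, (v j)^2 := by rw [hww]
    calc Real.sqrt (∑ i, ((C.mulVec v) i) ^ 2)
        ≤ Real.sqrt (specRad D * ∑ i, (v i)^2) := Real.sqrt_le_sqrt key
      _ = specRad D ^ ((1:ℝ)/2) * Real.sqrt (∑ i, (v i)^2) := by
          rw [Real.sqrt_mul hρ0, Real.sqrt_eq_rpow]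
  -- Part 2
  have part2 : specRad D ≤ specRad M ^ (2*α) := by
    apply specRad_le_rpow_of_pow_norm_le hβ
    intro k
    apply norm_le_of_sqrt hβ (pow_nonneg_entry hD0 k) (pow_nonneg_entry hMent k)
    intro i j
    have hE0 : ∀ i j, 0 ≤ (hadPow M (2*α)) i j :=
      fun i j => Real.rpow_nonneg (hMent i j) _
    have hDE : ∀ i j, D i j ≤ Real.sqrt ((hadPow M (2*α)) i j * (hadPow M (2*α)) j i) := by
      intro i j
      refine le_of_eq ?_
      rw [hDent i j]
      exact (rpow_half_mul (hMent i j) (hMent j i)).symm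
    have h5 := pow_le_sqrt hD0 hE0 hDE k i j
    refine h5.trans (Real.sqrt_le_sqrt ?_)
    have hEk := pow_nonneg_entry hE0 k
    exact mul_le_mul (pow_hadPow_le hMent hβ k i j) (pow_hadPow_le hMent hβ k j i)
      (hEk j i) (Real.rpow_nonneg (pow_nonneg_entry hMent k i j) _)
  refine ⟨part1, ?_⟩
  have h6 : specRad D ^ ((1:ℝ)/2) ≤ (specRad M ^ (2*α)) ^ ((1:ℝ)/2) :=
    Real.rpow_le_rpow hρ0 part2 (by norm_num)
  refine h6.trans (le_of_eq ?_)
  rw [← Real.rpow_mul hρM0]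
  congr 1
  ring
end
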